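/- Let (V_n)_{n∈ℕ} be a non-conforming approximation of a reflexive Banach space V with respect to (X_n)_{n∈ℕ} and Y. If A_n : X_n → X_n* and B_n : X_n → X_n*, n ∈ ℕ, are non-conforming pseudo-monotone with respect to (V_n)_{n∈ℕ} and A : V → V* and B : V → V*, respectively, then the sequence A_n + B_n : X_n → X_n*, n ∈ ℕ, is non-conforming pseudo-monotone with respect to (V_n)_{n∈ℕ} and A + B : V → V*. -/

import Mathlib

open Filter Topology

/-- Weak convergence of a sequence in a normed space `Y`: testing against all
continuous linear functionals. -/
def WeakConv {Y : Type*} [NormedAddCommGroup Y] [NormedSpace ℝ Y]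
    (y : ℕ → Y) (l : Y) : Prop :=
  ∀ f : Y →L[ℝ] ℝ, Tendsto (fun n => f (y n)) atTop (nhds (f l))

/-- A normed space is reflexive if the canonical inclusion into its double dual is
surjective. -/
def IsReflexiveSpace (E : Type*) [NormedAddCommGroup E] [NormedSpace ℝ E] : Prop :=
  Function.Surjective (NormedSpace.inclusionInDoubleDual ℝ E)

variable {V Y : Type*} [NormedAddCommGroup V] [NormedSpace ℝ V]
  [NormedAddCommGroup Y] [NormedSpace ℝ Y]
  {X : ℕ → Type*} [∀ n, NormedAddCommGroup (X n)] [∀ n, NormedSpace ℝ (X n)]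

/-- `(Vₙ)` is a non-conforming approximation of `V` with respect to `(Xₙ)` and `Y`.
Here `j n : V →ₗᵢ[ℝ] X n` are the norm-preserving inclusions `V ⊆ Xₙ`,
`e n : X n →L[ℝ] Y` the inclusions `Xₙ ⊆ Y`, and `eV : V →L[ℝ] Y` the induced
inclusion `V ⊆ Y` (compatibility `e n ∘ j n = eV`). The two conditions are:
(NC.1) there is a dense set `D ⊆ V` such that every `v ∈ D` admits a sequence
`uₙ ∈ Vₙ` with `‖uₙ − v‖_{Xₙ} → 0`; (NC.2) every sequence `uₙ ∈ V_{mₙ}` with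
`mₙ → ∞` and `sup ‖uₙ‖ < ∞` has a subsequence converging weakly in `Y` to some
element of `V`. -/
def NonconformingApprox (j : ∀ n, V →ₗᵢ[ℝ] X n) (e : ∀ n, X n →L[ℝ] Y)
    (eV : V →L[ℝ] Y) (Vn : ∀ n, Submodule ℝ (X n)) : Prop :=
  (∀ n v, e n (j n v) = eV v) ∧
  (∃ D : Set V, Dense D ∧ ∀ v ∈ D, ∃ u : ∀ n, X n, (∀ n, u n ∈ Vn n) ∧
      Tendsto (fun n => ‖u n - j n v‖) atTop (nhds 0)) ∧
  (∀ m : ℕ → ℕ, Tendsto m atTop atTop →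
    ∀ u : ∀ n, X (m n), (∀ n, u n ∈ Vn (m n)) → (∃ C, ∀ n, ‖u n‖ ≤ C) →
      ∃ (φ : ℕ → ℕ) (v : V), StrictMono φ ∧
        WeakConv (fun ℓ => e (m (φ ℓ)) (u (φ ℓ))) (eV v))

/-- The sequence of operators `Aₙ : Xₙ → Xₙ*` is non-conforming pseudo-monotone with
respect to `(Vₙ)` and `A₀ : V → V*`: whenever `uₙ ∈ V_{mₙ}` with `mₙ → ∞`,
`sup ‖uₙ‖ < ∞`, `uₙ ⇀ v` weakly in `Y` for `v ∈ V`, and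
`limsupₙ ⟨A_{mₙ} uₙ, uₙ − v⟩ ≤ 0`, then
`⟨A₀ v, v − z⟩ ≤ liminfₙ ⟨A_{mₙ} uₙ, uₙ − z⟩` for all `z ∈ V`
(limes superior/inferior taken in the extended reals). -/
def NCPseudoMonotone (j : ∀ n, V →ₗᵢ[ℝ] X n) (e : ∀ n, X n →L[ℝ] Y)
    (eV : V →L[ℝ] Y) (Vn : ∀ n, Submodule ℝ (X n))
    (A : ∀ n, X n → (X n →L[ℝ] ℝ)) (A₀ : V → (V →L[ℝ] ℝ)) : Prop :=
  ∀ m : ℕ → ℕ, Tendsto m atTop atTop →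
    ∀ u : ∀ n, X (m n), (∀ n, u n ∈ Vn (m n)) → (∃ C, ∀ n, ‖u n‖ ≤ C) →
      ∀ v : V, WeakConv (fun n => e (m n) (u n)) (eV v) →
        limsup (fun n => ((A (m n) (u n)) (u n - j (m n) v) : EReal)) atTop ≤ 0 →
        ∀ z : V, ((A₀ v) (v - z) : EReal) ≤
          liminf (fun n => ((A (m n) (u n)) (u n - j (m n) z) : EReal)) atTop

/-- If `(Vₙ)` is a non-conforming approximation of the reflexive Banach
space `V` with respect to `(Xₙ)` and `Y`, and `Aₙ, Bₙ : Xₙ → Xₙ*` are non-conforming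
pseudo-monotone with respect to `(Vₙ)` and `A₀, B₀ : V → V*` respectively, then
`Aₙ + Bₙ` is non-conforming pseudo-monotone with respect to `(Vₙ)` and `A₀ + B₀`. -/
/- Auxiliary: if `Bₙ` is non-conforming pseudo-monotone w.r.t. `B₀` and the sum
`⟨Aₙuₙ + Bₙuₙ, uₙ - v⟩` has `limsup ≤ 0`, then the `A` part alone has `limsup ≤ 0`. -/
lemma stmt11_aux (j : ∀ n, V →ₗᵢ[ℝ] X n) (e : ∀ n, X n →L[ℝ] Y) (eV : V →L[ℝ] Y)
    (Vn : ∀ n, Submodule ℝ (X n))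
    (A B : ∀ n, X n → (X n →L[ℝ] ℝ)) (B₀ : V → (V →L[ℝ] ℝ))
    (hB : NCPseudoMonotone j e eV Vn B B₀)
    (m : ℕ → ℕ) (hm : Tendsto m atTop atTop)
    (u : ∀ n, X (m n)) (hu : ∀ n, u n ∈ Vn (m n)) (hbd : ∃ C, ∀ n, ‖u n‖ ≤ C)
    (v : V) (hw : WeakConv (fun n => e (m n) (u n)) (eV v))
    (hsum : limsup (fun n =>
        (((A (m n) (u n)) (u n - j (m n) v)
          + (B (m n) (u n)) (u n - j (m n) v) : ℝ) : EReal)) atTop ≤ 0) :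
    limsup (fun n => ((A (m n) (u n)) (u n - j (m n) v) : EReal)) atTop ≤ 0 := by
  set α : ℕ → ℝ := fun n => (A (m n) (u n)) (u n - j (m n) v) with hα
  set β : ℕ → ℝ := fun n => (B (m n) (u n)) (u n - j (m n) v) with hβ
  by_contra hpos
  rw [not_le] at hpos
  obtain ⟨c, hc0, hcl⟩ := EReal.exists_between_coe_real hpos
  have hc0' : (0 : ℝ) < c := by exact_mod_cast hc0
  have hfreq : ∃ᶠ n in atTop, (c : EReal) < ((α n : ℝ) : EReal) :=
    frequently_lt_of_lt_limsup (by isBoundedDefault) hcl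
  obtain ⟨φ, hφ, hφc⟩ := extraction_of_frequently_atTop hfreq
  have hφt : Tendsto φ atTop atTop := hφ.tendsto_atTop
  -- bound the B-part along the subsequence
  have hptwise : ∀ n, ((β (φ n) : ℝ) : EReal) ≤
      (((α (φ n) + β (φ n) : ℝ) : EReal) + ((-c : ℝ) : EReal)) := by
    intro n
    have hcα : c < α (φ n) := by exact_mod_cast hφc n
    rw [← EReal.coe_add]
    exact_mod_cast (by linarith : β (φ n) ≤ (α (φ n) + β (φ n)) + (-c))
  have hsumφ : limsup (fun n => ((α (φ n) + β (φ n) : ℝ) : EReal)) atTop ≤ 0 := by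
    have hle : limsup ((fun n => ((α n + β n : ℝ) : EReal)) ∘ φ) atTop
        ≤ limsup (fun n => ((α n + β n : ℝ) : EReal)) atTop := by
      rw [limsup_comp]
      exact limsup_le_limsup_of_le hφt
    exact le_trans hle hsum
  have hβφ : limsup (fun n => ((β (φ n) : ℝ) : EReal)) atTop ≤ ((-c : ℝ) : EReal) := by
    have h1 : limsup (fun n => ((β (φ n) : ℝ) : EReal)) atTop ≤
        limsup (fun n => (((α (φ n) + β (φ n) : ℝ) : EReal) + ((-c : ℝ) : EReal))) atTop :=
      limsup_le_limsup (Eventually.of_forall hptwise)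
    have h2 : limsup (fun n => (((α (φ n) + β (φ n) : ℝ) : EReal) + ((-c : ℝ) : EReal))) atTop
        ≤ limsup (fun n => ((α (φ n) + β (φ n) : ℝ) : EReal)) atTop
          + limsup (fun _ : ℕ => ((-c : ℝ) : EReal)) atTop := by
      apply EReal.limsup_add_le
      · right; rw [limsup_const]; exact EReal.coe_ne_top _
      · right; rw [limsup_const]; exact EReal.coe_ne_bot _
    rw [limsup_const] at h2
    calc limsup (fun n => ((β (φ n) : ℝ) : EReal)) atTop
        ≤ limsup (fun n => ((α (φ n) + β (φ n) : ℝ) : EReal)) atTop + ((-c : ℝ) : EReal) :=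
          le_trans h1 h2
      _ ≤ 0 + ((-c : ℝ) : EReal) := add_le_add hsumφ le_rfl
      _ = ((-c : ℝ) : EReal) := zero_add _
  have hβφ0 : limsup (fun n => ((β (φ n) : ℝ) : EReal)) atTop ≤ 0 := by
    refine le_trans hβφ ?_
    exact_mod_cast (by linarith : (-c : ℝ) ≤ 0)
  -- apply pseudo-monotonicity of B along the subsequence with z = v
  have hlif := hB (m ∘ φ) (hm.comp hφt) (fun n => u (φ n)) (fun n => hu (φ n))
    (hbd.imp fun C hC n => hC (φ n)) v
    (fun f => (hw f).comp hφt) hβφ0 v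
  have h0 : ((B₀ v) (v - v) : EReal) = 0 := by
    rw [sub_self, map_zero, EReal.coe_zero]
  rw [h0] at hlif
  have hcon : (0 : EReal) ≤ ((-c : ℝ) : EReal) :=
    le_trans (le_trans hlif (liminf_le_limsup)) hβφ
  have : (0 : ℝ) ≤ -c := by exact_mod_cast hcon
  linarith

theorem stmt11 [CompleteSpace V] [∀ n, CompleteSpace (X n)] [CompleteSpace Y]
    (hVrefl : IsReflexiveSpace V)
    (j : ∀ n, V →ₗᵢ[ℝ] X n) (e : ∀ n, X n →L[ℝ] Y) (eV : V →L[ℝ] Y)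
    (Vn : ∀ n, Submodule ℝ (X n))
    (hVncl : ∀ n, IsClosed (Vn n : Set (X n)))
    (hVnrefl : ∀ n, IsReflexiveSpace (Vn n))
    (hNC : NonconformingApprox j e eV Vn)
    (A B : ∀ n, X n → (X n →L[ℝ] ℝ)) (A₀ B₀ : V → (V →L[ℝ] ℝ))
    (hA : NCPseudoMonotone j e eV Vn A A₀)
    (hB : NCPseudoMonotone j e eV Vn B B₀) :
    NCPseudoMonotone j e eV Vn (fun n x => A n x + B n x) (fun v => A₀ v + B₀ v) := by
  intro m hm u hu hbd v hw hsum z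
  have hsum' : limsup (fun n =>
      (((A (m n) (u n)) (u n - j (m n) v)
        + (B (m n) (u n)) (u n - j (m n) v) : ℝ) : EReal)) atTop ≤ 0 := by
    simpa only [ContinuousLinearMap.add_apply] using hsum
  have hsum'' : limsup (fun n =>
      (((B (m n) (u n)) (u n - j (m n) v)
        + (A (m n) (u n)) (u n - j (m n) v) : ℝ) : EReal)) atTop ≤ 0 := by
    simpa only [add_comm] using hsum'
  have hAle : limsup (fun n => ((A (m n) (u n)) (u n - j (m n) v) : EReal)) atTop ≤ 0 :=
    stmt11_aux j e eV Vn A B B₀ hB m hm u hu hbd v hw hsum'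
  have hBle : limsup (fun n => ((B (m n) (u n)) (u n - j (m n) v) : EReal)) atTop ≤ 0 :=
    stmt11_aux j e eV Vn B A A₀ hA m hm u hu hbd v hw hsum''
  have h1 := hA m hm u hu hbd v hw hAle z
  have h2 := hB m hm u hu hbd v hw hBle z
  simp only [ContinuousLinearMap.add_apply, EReal.coe_add]
  calc ((A₀ v) (v - z) : EReal) + ((B₀ v) (v - z) : EReal)
      ≤ liminf (fun n => ((A (m n) (u n)) (u n - j (m n) z) : EReal)) atTop
        + liminf (fun n => ((B (m n) (u n)) (u n - j (m n) z) : EReal)) atTop :=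
        add_le_add h1 h2
    _ ≤ liminf (fun n => ((A (m n) (u n)) (u n - j (m n) z) : EReal)
          + ((B (m n) (u n)) (u n - j (m n) z) : EReal)) atTop :=
        EReal.le_liminf_add
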